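/- Let m be a message set with associated beliefs b, and let N be a positive homogeneous normalization such that N_{ai}(m_{a→i}) = 1 for every edge (a,i) ∈ E. For (a,i) ∈ E define K_{ai}(x_{a∖i}; x_i) = ψ_a(x_a) · (∏_{j∈a} b_j(x_j)) / b_a(x_a). Then for every edge (a,i), every fixed tuple x_{a∖i} ∈ {1,…,q}^{a∖i}, and every x_i ∈ {1,…,q}: m_{a→i}(x_i) = K_{ai}(x_{a∖i}; x_i) / N_{ai}(K_{ai}(x_{a∖i}; ·)). In particular, the messages are a function of the beliefs alone. -/

import Mathlib

open Finset Filter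

variable {V F : Type*} [Fintype V] [DecidableEq V] [Fintype F] [DecidableEq F]

/-- Configurations on the factor `a`: tuples `x_a ∈ {1,…,q}^a`. -/
abbrev Config (S : F → Finset V) (q : ℕ) (a : F) := {i : V // i ∈ S a} → Fin q

/-- The message `n_{i→a}(x_i) = φ_i(x_i) ∏_{a'∋i, a'≠a} m_{a'→i}(x_i)`. -/
noncomputable def nmsg (S : F → Finset V) {q : ℕ} (φ : V → Fin q → ℝ)
    (m : F → V → Fin q → ℝ) (i : V) (a : F) (x : Fin q) : ℝ :=
  φ i x * ∏ a' ∈ univ.filter (fun a' : F => i ∈ S a' ∧ a' ≠ a), m a' i x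

/-- The belief-propagation update `Θ_{ai}(m)(x_i) = Σ_{x_{a∖i}} ψ_a(x_a) ∏_{j∈a∖i} n_{j→a}(x_j)`. -/
noncomputable def theta (S : F → Finset V) {q : ℕ} (φ : V → Fin q → ℝ)
    (ψ : ∀ a : F, Config S q a → ℝ) (m : F → V → Fin q → ℝ)
    (a : F) (i : V) (hi : i ∈ S a) (x : Fin q) : ℝ :=
  ∑ y ∈ univ.filter (fun y : Config S q a => y ⟨i, hi⟩ = x),
    ψ a y * ∏ j ∈ (S a).attach.filter (fun j => j.1 ≠ i), nmsg S φ m j.1 a (y j)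

/-- The normalization constant `Z_i(m)` making the variable belief sum to `1`. -/
noncomputable def Zv (S : F → Finset V) {q : ℕ} (φ : V → Fin q → ℝ)
    (m : F → V → Fin q → ℝ) (i : V) : ℝ :=
  ∑ x : Fin q, φ i x * ∏ a ∈ univ.filter (fun a : F => i ∈ S a), m a i x

/-- The variable belief `b_i(x_i) = φ_i(x_i) ∏_{a∋i} m_{a→i}(x_i) / Z_i(m)`. -/
noncomputable def bv (S : F → Finset V) {q : ℕ} (φ : V → Fin q → ℝ)
    (m : F → V → Fin q → ℝ) (i : V) (x : Fin q) : ℝ :=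
  (φ i x * ∏ a ∈ univ.filter (fun a : F => i ∈ S a), m a i x) / Zv S φ m i

/-- The normalization constant `Z_a(m)` making the factor belief sum to `1`. -/
noncomputable def Zf (S : F → Finset V) {q : ℕ} (φ : V → Fin q → ℝ)
    (ψ : ∀ a : F, Config S q a → ℝ) (m : F → V → Fin q → ℝ) (a : F) : ℝ :=
  ∑ y : Config S q a, ψ a y * ∏ j ∈ (S a).attach, nmsg S φ m j.1 a (y j)

/-- The factor belief `b_a(x_a) = ψ_a(x_a) ∏_{i∈a} n_{i→a}(x_i) / Z_a(m)`. -/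
noncomputable def bfn (S : F → Finset V) {q : ℕ} (φ : V → Fin q → ℝ)
    (ψ : ∀ a : F, Config S q a → ℝ) (m : F → V → Fin q → ℝ) (a : F)
    (y : Config S q a) : ℝ :=
  (ψ a y * ∏ j ∈ (S a).attach, nmsg S φ m j.1 a (y j)) / Zf S φ ψ m a

/-- If the messages are normalized (`N_{ai}(m_{a→i}) = 1`), they can be recovered from the
beliefs alone: `m_{a→i}(x_i) = K_{ai}(x_{a∖i}; x_i) / N_{ai}(K_{ai}(x_{a∖i}; ·))` where
`K_{ai}(x_{a∖i}; x_i) = ψ_a(x_a) (∏_{j∈a} b_j(x_j)) / b_a(x_a)`, for any fixed `x_{a∖i}`. -/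
theorem messages_determined_by_beliefs
    (q : ℕ) (hq : 1 ≤ q) (S : F → Finset V) (hS : ∀ a, (S a).Nonempty)
    (φ : V → Fin q → ℝ) (ψ : ∀ a : F, Config S q a → ℝ)
    (hφ : ∀ i x, 0 < φ i x) (hψ : ∀ a y, 0 < ψ a y)
    (m : F → V → Fin q → ℝ) (hm : ∀ a i, i ∈ S a → ∀ x, 0 < m a i x)
    (N : F → V → (Fin q → ℝ) → ℝ)
    (hNhom : ∀ a i, i ∈ S a → ∀ lam : ℝ, 0 ≤ lam → ∀ u : Fin q → ℝ, (∀ x, 0 ≤ u x) →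
      N a i (fun x => lam * u x) = lam * N a i u)
    (hNzero : ∀ a i, i ∈ S a → ∀ u : Fin q → ℝ, (∀ x, 0 ≤ u x) → (N a i u = 0 ↔ u = 0))
    (hNnonneg : ∀ a i, i ∈ S a → ∀ u : Fin q → ℝ, (∀ x, 0 ≤ u x) → 0 ≤ N a i u)
    (hN1 : ∀ a i, i ∈ S a → N a i (m a i) = 1) :
    ∀ a i (hi : i ∈ S a) (y : Config S q a) (t : Fin q),
      m a i t
        = (ψ a (Function.update y ⟨i, hi⟩ t) *
            (∏ j ∈ (S a).attach, bv S φ m j.1 (Function.update y ⟨i, hi⟩ t j)) /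
            bfn S φ ψ m a (Function.update y ⟨i, hi⟩ t)) /
          N a i (fun s : Fin q =>
            ψ a (Function.update y ⟨i, hi⟩ s) *
              (∏ j ∈ (S a).attach, bv S φ m j.1 (Function.update y ⟨i, hi⟩ s j)) /
              bfn S φ ψ m a (Function.update y ⟨i, hi⟩ s)) := by
  intro a i hi y t
  haveI : NeZero q := ⟨Nat.pos_iff_ne_zero.mp hq⟩
  -- positivity facts
  have hnpos : ∀ (j : V) (a' : F), j ∈ S a' → ∀ x, 0 < nmsg S φ m j a' x := by
    intro j a' hj x
    unfold nmsg
    refine mul_pos (hφ j x) (Finset.prod_pos ?_)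
    intro b hb
    simp only [Finset.mem_filter, Finset.mem_univ, true_and] at hb
    exact hm b j hb.1 x
  have hZv : ∀ j : V, 0 < Zv S φ m j := by
    intro j
    unfold Zv
    refine Finset.sum_pos (fun x _ => mul_pos (hφ j x) (Finset.prod_pos ?_)) univ_nonempty
    intro b hb
    simp only [Finset.mem_filter, Finset.mem_univ, true_and] at hb
    exact hm b j hb x
  have hZf : 0 < Zf S φ ψ m a := by
    unfold Zf
    refine Finset.sum_pos (fun x _ => mul_pos (hψ a x) (Finset.prod_pos ?_)) univ_nonempty
    intro j _
    exact hnpos j.1 a j.2 (x j)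
  have hsplit : ∀ (j : V), j ∈ S a → ∀ x : Fin q,
      ∏ a' ∈ univ.filter (fun a' : F => j ∈ S a'), m a' j x
        = m a j x * ∏ a' ∈ univ.filter (fun a' : F => j ∈ S a' ∧ a' ≠ a), m a' j x := by
    intro j hj x
    rw [← Finset.prod_filter_mul_prod_filter_not (univ.filter fun a' : F => j ∈ S a')
      (fun a' => a' = a)]
    congr 1
    · have h : (univ.filter fun a' : F => j ∈ S a').filter (fun a' => a' = a) = {a} := by
        ext b
        simp only [Finset.mem_filter, Finset.mem_univ, true_and, Finset.mem_singleton]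
        constructor
        · rintro ⟨_, rfl⟩; rfl
        · rintro rfl; exact ⟨hj, rfl⟩
      rw [h, Finset.prod_singleton]
    · rw [Finset.filter_filter]
  -- key identity for each configuration
  have key : ∀ x : Config S q a,
      ψ a x * (∏ j ∈ (S a).attach, bv S φ m j.1 (x j)) / bfn S φ ψ m a x
        = (∏ j ∈ (S a).attach, m a j.1 (x j)) * Zf S φ ψ m a
            / ∏ j ∈ (S a).attach, Zv S φ m j.1 := by
    intro x
    have h1 : ∏ j ∈ (S a).attach, bv S φ m j.1 (x j)
        = (∏ j ∈ (S a).attach, nmsg S φ m j.1 a (x j))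
          * (∏ j ∈ (S a).attach, m a j.1 (x j)) / ∏ j ∈ (S a).attach, Zv S φ m j.1 := by
      unfold bv
      rw [Finset.prod_div_distrib, ← Finset.prod_mul_distrib]
      congr 1
      refine Finset.prod_congr rfl (fun j _ => ?_)
      rw [hsplit j.1 j.2 (x j)]
      unfold nmsg
      ring
    rw [h1]
    unfold bfn
    have hψp : (0:ℝ) < ψ a x := hψ a x
    have hnp : 0 < ∏ j ∈ (S a).attach, nmsg S φ m j.1 a (x j) :=
      Finset.prod_pos (fun j _ => hnpos j.1 a j.2 (x j))
    have hZvp : 0 < ∏ j ∈ (S a).attach, Zv S φ m j.1 :=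
      Finset.prod_pos (fun j _ => hZv j.1)
    field_simp
  -- the constant c
  set c := (∏ j ∈ (S a).attach.filter (fun j => j.1 ≠ i), m a j.1 (y j)) * Zf S φ ψ m a
      / ∏ j ∈ (S a).attach, Zv S φ m j.1 with hcdef
  have hcpos : 0 < c := by
    refine div_pos (mul_pos (Finset.prod_pos ?_) hZf) (Finset.prod_pos (fun j _ => hZv j.1))
    intro j hj
    exact hm a j.1 j.2 (y j)
  have hprod : ∀ s : Fin q,
      ∏ j ∈ (S a).attach, m a j.1 (Function.update y ⟨i, hi⟩ s j)
        = m a i s * ∏ j ∈ (S a).attach.filter (fun j => j.1 ≠ i), m a j.1 (y j) := by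
    intro s
    rw [← Finset.prod_filter_mul_prod_filter_not (S a).attach (fun j => j.1 = i)]
    congr 1
    · have h : (S a).attach.filter (fun j => j.1 = i) = {(⟨i, hi⟩ : {v // v ∈ S a})} := by
        ext j
        simp [Subtype.ext_iff]
      rw [h, Finset.prod_singleton, Function.update_self]
    · refine Finset.prod_congr (by simp [ne_eq]) (fun j hj => ?_)
      simp only [Finset.mem_filter, ne_eq] at hj
      rw [Function.update_of_ne (fun h => hj.2 (by rw [h]))]
  have h2 : ∀ s : Fin q,
      ψ a (Function.update y ⟨i, hi⟩ s) *
          (∏ j ∈ (S a).attach, bv S φ m j.1 (Function.update y ⟨i, hi⟩ s j)) /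
          bfn S φ ψ m a (Function.update y ⟨i, hi⟩ s)
        = c * m a i s := by
    intro s
    rw [key (Function.update y ⟨i, hi⟩ s), hprod s, hcdef]
    ring
  simp only [h2]
  rw [hNhom a i hi c hcpos.le (m a i) (fun x => (hm a i hi x).le), hN1 a i hi, mul_one,
    mul_comm, mul_div_assoc, div_self hcpos.ne', mul_one]
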